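/- Optimal partition recursion: for every integer s ≥ 2, F(s) = min over integers 1 ≤ r < s of { F(r) + C(r, s−1) + β }; that is, the optimal penalized segmentation of the first s−1 data points is obtained by optimizing over the location r of the last changepoint and adding the cost of the final segment plus one changepoint penalty. -/
import Mathlib


/-- The optimal-partition objective: `opF C β s` is the minimum, over all changepoint
vectors `1 = τ₀ < τ₁ < ⋯ < τ_m < τ_{m+1} = s`, of the total segment cost
`∑_{i=1}^{m+1} C (τ_{i-1}) (τ_i - 1)` plus a penalty `β` per changepoint,
with the convention `opF C β 1 = -β`. -/
noncomputable def opF (C : ℕ → ℕ → ℝ) (β : ℝ) (s : ℕ) : ℝ :=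
  if s = 1 then -β
  else sInf {v : ℝ | ∃ (m : ℕ) (τ : ℕ → ℕ),
    τ 0 = 1 ∧ τ (m + 1) = s ∧ (∀ i ≤ m, τ i < τ (i + 1)) ∧
    v = (∑ i ∈ Finset.range (m + 1), C (τ i) (τ (i + 1) - 1)) + (m : ℝ) * β}

def segSet (C : ℕ → ℕ → ℝ) (β : ℝ) (s : ℕ) : Set ℝ :=
  {v : ℝ | ∃ (m : ℕ) (τ : ℕ → ℕ),
    τ 0 = 1 ∧ τ (m + 1) = s ∧ (∀ i ≤ m, τ i < τ (i + 1)) ∧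
    v = (∑ i ∈ Finset.range (m + 1), C (τ i) (τ (i + 1) - 1)) + (m : ℝ) * β}

lemma opF_of_ne (C : ℕ → ℕ → ℝ) (β : ℝ) (s : ℕ) (h : s ≠ 1) :
    opF C β s = sInf (segSet C β s) := by
  simp only [opF, if_neg h]; rfl

lemma tau_lower (τ : ℕ → ℕ) (m : ℕ) (h : ∀ i ≤ m, τ i < τ (i + 1)) :
    ∀ j ≤ m + 1, τ 0 + j ≤ τ j := by
  intro j hj
  induction j with
  | zero => simp
  | succ k ih =>
    have h1 := h k (by omega)
    have h2 := ih (by omega)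
    omega

lemma tau_mono (τ : ℕ → ℕ) (m : ℕ) (h : ∀ i ≤ m, τ i < τ (i + 1)) :
    ∀ i j, i ≤ j → j ≤ m + 1 → τ i ≤ τ j := by
  intro i j hij hj
  induction j with
  | zero => simp [Nat.le_zero.mp hij]
  | succ k ih =>
    rcases Nat.lt_or_ge i (k + 1) with h1 | h1
    · have h2 : τ i ≤ τ k := ih (by omega) (by omega)
      have h3 := h k (by omega)
      omega
    · have : i = k + 1 := by omega
      subst this; exact le_rfl

lemma segSet_finite (C : ℕ → ℕ → ℝ) (β : ℝ) (s : ℕ) : (segSet C β s).Finite := by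
  classical
  apply Set.Finite.subset (Set.finite_range
    (fun p : Fin (s + 1) × (Fin (s + 2) → Fin (s + 1)) =>
      (∑ i ∈ Finset.range ((p.1 : ℕ) + 1),
        C ((fun j : ℕ => if h : j < s + 2 then (p.2 ⟨j, h⟩ : ℕ) else 0) i)
          ((fun j : ℕ => if h : j < s + 2 then (p.2 ⟨j, h⟩ : ℕ) else 0) (i + 1) - 1))
        + ((p.1 : ℕ) : ℝ) * β))
  rintro v ⟨m, τ, h0, h1, hlt, rfl⟩
  have hms : m + 2 ≤ s := by
    have := tau_lower τ m hlt (m + 1) le_rfl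
    omega
  have hτle : ∀ i ≤ m + 1, τ i ≤ s := by
    intro i hi
    have := tau_mono τ m hlt i (m + 1) hi le_rfl
    omega
  refine ⟨(⟨m, by omega⟩, fun j => ⟨min (τ j) s, by omega⟩), ?_⟩
  simp only
  congr 1
  apply Finset.sum_congr rfl
  intro i hi
  simp only [Finset.mem_range] at hi
  rw [dif_pos (by omega : i < s + 2), dif_pos (by omega : i + 1 < s + 2)]
  rw [min_eq_left (hτle i (by omega)), min_eq_left (hτle (i + 1) (by omega))]

lemma single_mem (C : ℕ → ℕ → ℝ) (β : ℝ) (s : ℕ) (hs : 2 ≤ s) :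
    C 1 (s - 1) ∈ segSet C β s := by
  refine ⟨0, fun i => if i = 0 then 1 else s, rfl, rfl, ?_, ?_⟩
  · intro i hi
    have hi0 : i = 0 := Nat.le_zero.mp hi
    subst hi0
    simpa using (by omega : 1 < s)
  · norm_num

lemma segSet_nonempty (C : ℕ → ℕ → ℝ) (β : ℝ) (s : ℕ) (hs : 2 ≤ s) :
    (segSet C β s).Nonempty := ⟨_, single_mem C β s hs⟩

lemma mem_concat (C : ℕ → ℕ → ℝ) (β : ℝ) (r s : ℕ) (hrs : r < s) (a : ℝ)
    (ha : a ∈ segSet C β r) : a + C r (s - 1) + β ∈ segSet C β s := by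
  obtain ⟨m, τ, h0, h1, hlt, rfl⟩ := ha
  refine ⟨m + 1, fun i => if i ≤ m + 1 then τ i else s, by simp [h0], ?_, ?_, ?_⟩
  · simp
  · intro i hi
    rcases Nat.lt_or_ge i (m + 1) with h | h
    · simp only [if_pos (by omega : i ≤ m + 1), if_pos (by omega : i + 1 ≤ m + 1)]
      exact hlt i (by omega)
    · have : i = m + 1 := by omega
      subst this
      simp only [if_pos le_rfl, if_neg (by omega : ¬ m + 1 + 1 ≤ m + 1), h1]
      exact hrs
  · have hsum : ∀ i ∈ Finset.range (m + 1),
        C ((fun j => if j ≤ m + 1 then τ j else s) i)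
          ((fun j => if j ≤ m + 1 then τ j else s) (i + 1) - 1)
          = C (τ i) (τ (i + 1) - 1) := by
      intro i hi
      simp only [Finset.mem_range] at hi
      simp only [if_pos (by omega : i ≤ m + 1), if_pos (by omega : i + 1 ≤ m + 1)]
    conv_rhs => rw [Finset.sum_range_succ, Finset.sum_congr rfl hsum]
    simp only [if_pos le_rfl, if_neg (by omega : ¬ m + 1 + 1 ≤ m + 1), h1]
    push_cast
    ring

/-- Optimal partition recursion: for every `s ≥ 2`,
`F(s) = min_{1 ≤ r < s} { F(r) + C(r, s-1) + β }`. -/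
theorem optimal_partition_recursion (C : ℕ → ℕ → ℝ) (β : ℝ) (s : ℕ) (hs : 2 ≤ s) :
    opF C β s =
      sInf {v : ℝ | ∃ r : ℕ, 1 ≤ r ∧ r < s ∧ v = opF C β r + C r (s - 1) + β} := by
  classical
  have hs1 : s ≠ 1 := by omega
  set B := {v : ℝ | ∃ r : ℕ, 1 ≤ r ∧ r < s ∧ v = opF C β r + C r (s - 1) + β} with hB
  rw [opF_of_ne C β s hs1]
  have hBfin : B.Finite := by
    apply Set.Finite.subset
      (Set.Finite.image (fun r => opF C β r + C r (s - 1) + β) (Set.finite_Ico 1 s))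
    rintro v ⟨r, h1, h2, rfl⟩
    exact ⟨r, ⟨h1, h2⟩, rfl⟩
  have hBne : B.Nonempty := ⟨_, 1, le_rfl, by omega, rfl⟩
  have hAfin := segSet_finite C β s
  have hAne : (segSet C β s).Nonempty := segSet_nonempty C β s hs
  apply le_antisymm
  · apply le_csInf hBne
    rintro b ⟨r, hr1, hr2, rfl⟩
    rcases eq_or_lt_of_le hr1 with h | h
    · have h1 : opF C β 1 = -β := by simp [opF]
      rw [← h, h1]
      have hle := csInf_le hAfin.bddBelow (single_mem C β s hs)
      linarith
    · have hr2' : 2 ≤ r := h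
      have hmem := (segSet_nonempty C β r hr2').csInf_mem (segSet_finite C β r)
      rw [opF_of_ne C β r (by omega)]
      exact csInf_le hAfin.bddBelow (mem_concat C β r s hr2 _ hmem)
  · apply le_csInf hAne
    rintro v ⟨m, τ, h0, h1, hlt, rfl⟩
    cases m with
    | zero =>
      apply csInf_le hBfin.bddBelow
      refine ⟨1, le_rfl, by omega, ?_⟩
      have h1' : τ 1 = s := h1
      rw [show opF C β 1 = -β by simp [opF]]
      simp only [zero_add, Finset.range_one, Finset.sum_singleton, h0, h1', Nat.cast_zero,
        zero_mul, add_zero]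
      ring
    | succ k =>
      have hr2 : 2 ≤ τ (k + 1) := by
        have := tau_lower τ (k + 1) hlt (k + 1) (by omega)
        omega
      have hrs : τ (k + 1) < s := by
        have := hlt (k + 1) le_rfl
        omega
      have hpre : (∑ i ∈ Finset.range (k + 1), C (τ i) (τ (i + 1) - 1)) + (k : ℝ) * β
          ∈ segSet C β (τ (k + 1)) :=
        ⟨k, τ, h0, rfl, fun i hi => hlt i (by omega), rfl⟩
      have h3 : opF C β (τ (k + 1)) ≤
          (∑ i ∈ Finset.range (k + 1), C (τ i) (τ (i + 1) - 1)) + (k : ℝ) * β := by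
        rw [opF_of_ne C β (τ (k + 1)) (by omega)]
        exact csInf_le (segSet_finite C β (τ (k + 1))).bddBelow hpre
      have h4 : opF C β (τ (k + 1)) + C (τ (k + 1)) (s - 1) + β ∈ B :=
        ⟨τ (k + 1), by omega, hrs, rfl⟩
      have h5 := csInf_le hBfin.bddBelow h4
      rw [Finset.sum_range_succ, h1]
      push_cast
      linarith
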